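/- arXiv:2401.02373 — 4 statements merged into one kernel-verified Lean document; each statement's English description precedes it below -/
import Mathlib

section
/- For integers n, m ≥ 5, all four mutual-visibility numbers of K_n × K_m coincide: μ_t(K_n × K_m) = μ_o(K_n × K_m) = μ_d(K_n × K_m) = μ(K_n × K_m) = nm − 4. -/
namespace MutualVisibility

open SimpleGraph

variable {V W : Type*}

/-- `x` and `y` are `X`-visible in `G`: there is a shortest `x,y`-path all of whose
internal vertices avoid `X`. -/
def Visible (G : SimpleGraph V) (X : Set V) (x y : V) : Prop :=
  ∃ p : G.Walk x y, p.length = G.dist x y ∧ ∀ v ∈ p.support, v ≠ x → v ≠ y → v ∉ X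

/-- `X` is a mutual-visibility set: any two vertices of `X` are `X`-visible. -/
def IsMutualVisSet (G : SimpleGraph V) (X : Set V) : Prop :=
  ∀ x ∈ X, ∀ y ∈ X, Visible G X x y

/-- outer mutual-visibility set -/
def IsOuterMutualVisSet (G : SimpleGraph V) (X : Set V) : Prop :=
  IsMutualVisSet G X ∧ ∀ x ∈ X, ∀ y ∉ X, Visible G X x y

/-- dual mutual-visibility set -/
def IsDualMutualVisSet (G : SimpleGraph V) (X : Set V) : Prop :=
  IsMutualVisSet G X ∧ ∀ x ∉ X, ∀ y ∉ X, Visible G X x y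

/-- total mutual-visibility set -/
def IsTotalMutualVisSet (G : SimpleGraph V) (X : Set V) : Prop :=
  ∀ x y : V, Visible G X x y

/-- mutual-visibility number μ(G) -/
noncomputable def mu (G : SimpleGraph V) : ℕ :=
  sSup {k | ∃ X : Set V, IsMutualVisSet G X ∧ X.ncard = k}

/-- outer mutual-visibility number μ_o(G) -/
noncomputable def muOuter (G : SimpleGraph V) : ℕ :=
  sSup {k | ∃ X : Set V, IsOuterMutualVisSet G X ∧ X.ncard = k}

/-- dual mutual-visibility number μ_d(G) -/
noncomputable def muDual (G : SimpleGraph V) : ℕ :=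
  sSup {k | ∃ X : Set V, IsDualMutualVisSet G X ∧ X.ncard = k}

/-- total mutual-visibility number μ_t(G) -/
noncomputable def muTotal (G : SimpleGraph V) : ℕ :=
  sSup {k | ∃ X : Set V, IsTotalMutualVisSet G X ∧ X.ncard = k}

/-- `H` contains a subgraph copy of `F`. -/
def ContainsCopy (F : SimpleGraph W) (H : SimpleGraph V) : Prop :=
  ∃ f : W → V, Function.Injective f ∧ ∀ a b, F.Adj a b → H.Adj (f a) (f b)

/-- The Turán number ex(n; F): max number of edges of an `n`-vertex graph with no copy of `F`. -/
noncomputable def exNum (n : ℕ) (F : SimpleGraph W) : ℕ :=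
  sSup {k | ∃ H : SimpleGraph (Fin n), ¬ ContainsCopy F H ∧ H.edgeSet.ncard = k}

/-- The direct (tensor/categorical) product of graphs. -/
def directProd (G : SimpleGraph V) (H : SimpleGraph W) : SimpleGraph (V × W) where
  Adj x y := G.Adj x.1 y.1 ∧ H.Adj x.2 y.2
  symm := ⟨fun _ _ h => ⟨h.1.symm, h.2.symm⟩⟩
  loopless := ⟨fun x h => G.loopless.irrefl x.1 h.1⟩

/-- The join `G + H` of two graphs. -/
def graphJoin (G : SimpleGraph V) (H : SimpleGraph W) : SimpleGraph (V ⊕ W) where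
  Adj u v := match u, v with
    | Sum.inl a, Sum.inl b => G.Adj a b
    | Sum.inr a, Sum.inr b => H.Adj a b
    | _, _ => True
  symm := ⟨fun u v => match u, v with
    | Sum.inl _, Sum.inl _ => fun h => G.symm.symm _ _ h
    | Sum.inr _, Sum.inr _ => fun h => H.symm.symm _ _ h
    | Sum.inl _, Sum.inr _ => fun _ => trivial
    | Sum.inr _, Sum.inl _ => fun _ => trivial⟩
  loopless := ⟨fun u => match u with
    | Sum.inl a => G.loopless.irrefl a
    | Sum.inr a => H.loopless.irrefl a⟩

/-- A big-μ graph: `G = (K_1 ∪ K_t) + H` for some `t ≥ 0` and some graph `H`. -/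
def IsBigMu {V : Type} (G : SimpleGraph V) : Prop :=
  ∃ (t : ℕ) (W : Type) (H : SimpleGraph W),
    Nonempty (G ≃g graphJoin ((⊤ : SimpleGraph (Fin 1)) ⊕g (⊤ : SimpleGraph (Fin t))) H)

/-- A cograph: a graph with no induced path on four vertices. -/
def IsCograph (G : SimpleGraph V) : Prop :=
  ¬ ∃ f : Fin 4 → V, Function.Injective f ∧
      ∀ a b, (pathGraph 4).Adj a b ↔ G.Adj (f a) (f b)

/-- The Petersen graph, realized as the Kneser graph K(5,2). -/
def petersen : SimpleGraph {s : Finset (Fin 5) // s.card = 2} where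
  Adj a b := Disjoint a.1 b.1
  symm := ⟨fun _ _ h => h.symm⟩
  loopless := by
    constructor
    rintro ⟨s, hs⟩ h
    rw [disjoint_self, Finset.bot_eq_empty] at h
    subst h
    simp at hs

section Aux

open SimpleGraph.Walk

variable {n m : ℕ}

lemma adj_iff (x y : Fin n × Fin m) :
    (directProd (⊤ : SimpleGraph (Fin n)) (⊤ : SimpleGraph (Fin m))).Adj x y ↔
      x.1 ≠ y.1 ∧ x.2 ≠ y.2 := by
  constructor
  · rintro ⟨h1, h2⟩; exact ⟨h1.ne, h2.ne⟩
  · rintro ⟨h1, h2⟩; exact ⟨h1, h2⟩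

lemma avoid3 (a b c : ℕ) : ∃ k, k < 4 ∧ k ≠ a ∧ k ≠ b ∧ k ≠ c := by
  by_cases h0 : 0 ≠ a ∧ 0 ≠ b ∧ 0 ≠ c
  · exact ⟨0, by omega, h0⟩
  by_cases h1 : 1 ≠ a ∧ 1 ≠ b ∧ 1 ≠ c
  · exact ⟨1, by omega, h1⟩
  by_cases h2 : 2 ≠ a ∧ 2 ≠ b ∧ 2 ≠ c
  · exact ⟨2, by omega, h2⟩
  refine ⟨3, by omega, ?_⟩
  push_neg at h0 h1 h2
  omega

variable (hn : 5 ≤ n) (hm : 5 ≤ m)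

abbrev GP (n m : ℕ) := directProd (⊤ : SimpleGraph (Fin n)) (⊤ : SimpleGraph (Fin m))

include hn hm in
lemma exists_common (x y : Fin n × Fin m) :
    ∃ z, (GP n m).Adj x z ∧ (GP n m).Adj z y := by
  obtain ⟨k, hk4, hk1, hk2, -⟩ := avoid3 x.1.val y.1.val 0
  obtain ⟨l, hl4, hl1, hl2, -⟩ := avoid3 x.2.val y.2.val 0
  refine ⟨(⟨k, by omega⟩, ⟨l, by omega⟩), ⟨?_, ?_⟩, ⟨?_, ?_⟩⟩ <;>
    simp [top_adj, Fin.ext_iff] <;> omega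

include hn hm in
lemma dist_eq_two {x y : Fin n × Fin m} (hne : x ≠ y) (hnadj : ¬ (GP n m).Adj x y) :
    (GP n m).dist x y = 2 := by
  obtain ⟨z, h1, h2⟩ := exists_common hn hm x y
  have hle : (GP n m).dist x y ≤ 2 := by
    have := SimpleGraph.dist_le ((h1.toWalk.append h2.toWalk) : (GP n m).Walk x y)
    simpa using this
  have hreach : (GP n m).Reachable x y := ⟨h1.toWalk.append h2.toWalk⟩
  have h0 : (GP n m).dist x y ≠ 0 := by
    intro h; exact hne (hreach.dist_eq_zero_iff.mp h)
  have h1' : (GP n m).dist x y ≠ 1 := by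
    intro h; exact hnadj (SimpleGraph.dist_eq_one_iff_adj.mp h)
  omega

lemma visible_of_eq {V : Type*} (G : SimpleGraph V) (X : Set V) (x : V) :
    Visible G X x x := by
  refine ⟨Walk.nil, by simp [SimpleGraph.dist_self], ?_⟩
  intro v hv hvx _
  simp at hv; exact absurd hv hvx

lemma visible_of_adj {V : Type*} {G : SimpleGraph V} (X : Set V) {x y : V} (h : G.Adj x y) :
    Visible G X x y := by
  refine ⟨h.toWalk, by simp [(SimpleGraph.dist_eq_one_iff_adj.mpr h)], ?_⟩
  intro v hv hvx hvy
  simp [Walk.support_cons] at hv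
  rcases hv with h | h
  · exact absurd h hvx
  · exact absurd h hvy

include hn hm in
lemma visible_of_mid {X : Set (Fin n × Fin m)} {x y z : Fin n × Fin m} (hne : x ≠ y)
    (hnadj : ¬ (GP n m).Adj x y) (h1 : (GP n m).Adj x z) (h2 : (GP n m).Adj z y)
    (hz : z ∉ X) : Visible (GP n m) X x y := by
  refine ⟨h1.toWalk.append h2.toWalk, ?_, ?_⟩
  · simp [dist_eq_two hn hm hne hnadj]
  · intro v hv hvx hvy
    simp [Walk.support_append] at hv
    rcases hv with h | h | h
    · exact absurd h hvx
    · exact h ▸ hz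
    · exact absurd h hvy

include hn hm in
lemma get_mid {X : Set (Fin n × Fin m)} {x y : Fin n × Fin m} (hne : x ≠ y)
    (hnadj : ¬ (GP n m).Adj x y) (hvis : Visible (GP n m) X x y) :
    ∃ z, z ∉ X ∧ (GP n m).Adj x z ∧ (GP n m).Adj z y := by
  obtain ⟨p, hlen, hsup⟩ := hvis
  rw [dist_eq_two hn hm hne hnadj] at hlen
  cases p with
  | nil => simp at hlen
  | cons h q =>
    cases q with
    | nil => simp at hlen
    | cons h' q' =>
      cases q' with
      | nil =>
        exact ⟨_, hsup _ (by simp) h.ne' h'.ne, h, h'⟩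
      | cons h'' q'' => simp at hlen

lemma cover2 {N : ℕ} (hN : 5 ≤ N) (a b c : Fin N) :
    (a ≠ b ∧ a ≠ c ∧ b ≠ c) ∨
      ∃ j j' : Fin N, j ≠ j' ∧ (a = j ∨ a = j') ∧ (b = j ∨ b = j') ∧ (c = j ∨ c = j') := by
  by_cases hab : a = b
  · subst hab
    by_cases hac : a = c
    · subst hac
      obtain ⟨k, hk4, hk, -, -⟩ := avoid3 a.val 0 0
      exact Or.inr ⟨a, ⟨k, by omega⟩, fun h => hk (by rw [h]), Or.inl rfl, Or.inl rfl,
        Or.inl rfl⟩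
    · exact Or.inr ⟨a, c, hac, Or.inl rfl, Or.inl rfl, Or.inr rfl⟩
  · by_cases hac : a = c
    · exact Or.inr ⟨a, b, hab, Or.inl rfl, Or.inr rfl, Or.inl (hac.symm)⟩
    · by_cases hbc : b = c
      · exact Or.inr ⟨a, b, hab, Or.inl rfl, Or.inr rfl, Or.inr hbc.symm⟩
      · exact Or.inl ⟨hab, hac, hbc⟩

include hn hm in
lemma blocked_contra {X t : Set (Fin n × Fin m)} (hX : IsMutualVisSet (GP n m) X)
    (hCt : Xᶜ ⊆ t) {x y : Fin n × Fin m} (hx : x ∉ t) (hy : y ∉ t) (hne : x ≠ y)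
    (hnadj : ¬ (GP n m).Adj x y)
    (hb : ∀ z ∈ t, ¬((GP n m).Adj x z ∧ (GP n m).Adj z y)) : False := by
  have hxX : x ∈ X := by by_contra h; exact hx (hCt h)
  have hyX : y ∈ X := by by_contra h; exact hy (hCt h)
  obtain ⟨z, hz, h1, h2⟩ := get_mid hn hm hne hnadj (hX x hxX y hyX)
  exact hb z (hCt hz) ⟨h1, h2⟩

include hn hm in
lemma mv_ncard_le {X : Set (Fin n × Fin m)} (hX : IsMutualVisSet (GP n m) X) :
    X.ncard ≤ n * m - 4 := by
  by_contra hcon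
  push_neg at hcon
  have hcard : X.ncard + Xᶜ.ncard = n * m := by
    rw [Set.ncard_add_ncard_compl]
    simp [Nat.card_prod]
  have hXle : X.ncard ≤ n * m := by omega
  have hC3 : Xᶜ.ncard ≤ 3 := by
    have hnm : 25 ≤ n * m := Nat.mul_le_mul hn hm
    omega
  have huniv : (3 : ℕ) ≤ (Set.univ : Set (Fin n × Fin m)).ncard := by
    rw [Set.ncard_univ]
    have hnm : 25 ≤ n * m := Nat.mul_le_mul hn hm
    simp [Nat.card_prod]; omega
  obtain ⟨t, hCt, -, ht3⟩ := Set.exists_subsuperset_card_eq (Set.subset_univ Xᶜ) hC3 huniv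
  obtain ⟨a, b, c, hab, hac, hbc, rfl⟩ := Set.ncard_eq_three.mp ht3
  -- case on columns
  rcases cover2 hm a.2 b.2 c.2 with ⟨cab, cac, cbc⟩ | ⟨j, j', hjj', hja, hjb, hjc⟩
  · -- columns pairwise distinct; case on rows
    rcases cover2 hn a.1 b.1 c.1 with ⟨rab, rac, rbc⟩ | ⟨i, i', hii', hia, hib, hic⟩
    · -- all rows and all columns distinct
      refine blocked_contra hn hm hX hCt (x := (a.1, b.2)) (y := (a.1, c.2)) ?_ ?_ ?_ ?_ ?_
      · simp only [Set.mem_insert_iff, Set.mem_singleton_iff, Prod.ext_iff, not_or]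
        refine ⟨fun h => cab h.2.symm, fun h => rab h.1, fun h => rac h.1⟩
      · simp only [Set.mem_insert_iff, Set.mem_singleton_iff, Prod.ext_iff, not_or]
        refine ⟨fun h => cac h.2.symm, fun h => rab h.1, fun h => rac h.1⟩
      · intro h; exact cbc (Prod.ext_iff.mp h).2
      · rw [adj_iff]; rintro ⟨h1, -⟩; exact h1 rfl
      · rintro z (rfl | rfl | rfl) ⟨hxz, hzy⟩ <;> rw [adj_iff] at hxz hzy
        · exact hxz.1 rfl
        · exact hxz.2 rfl
        · exact hzy.2 rfl
    · -- rows covered by {i, i'}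
      obtain ⟨k, hk4, hk1, hk2, hk3⟩ := avoid3 a.2.val b.2.val c.2.val
      set jj : Fin m := ⟨k, by omega⟩ with hjjdef
      have hja' : jj ≠ a.2 := fun h => hk1 (by rw [← h])
      have hjb' : jj ≠ b.2 := fun h => hk2 (by rw [← h])
      have hjc' : jj ≠ c.2 := fun h => hk3 (by rw [← h])
      refine blocked_contra hn hm hX hCt (x := (i, jj)) (y := (i', jj)) ?_ ?_ ?_ ?_ ?_
      · simp only [Set.mem_insert_iff, Set.mem_singleton_iff, Prod.ext_iff, not_or]
        exact ⟨fun h => hja' h.2, fun h => hjb' h.2, fun h => hjc' h.2⟩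
      · simp only [Set.mem_insert_iff, Set.mem_singleton_iff, Prod.ext_iff, not_or]
        exact ⟨fun h => hja' h.2, fun h => hjb' h.2, fun h => hjc' h.2⟩
      · intro h; exact hii' (Prod.ext_iff.mp h).1
      · rw [adj_iff]; rintro ⟨-, h2⟩; exact h2 rfl
      · rintro z (rfl | rfl | rfl) ⟨hxz, hzy⟩ <;> rw [adj_iff] at hxz hzy
        · rcases hia with h | h
          · exact hxz.1 h.symm
          · exact hzy.1 (by rw [h])
        · rcases hib with h | h
          · exact hxz.1 h.symm
          · exact hzy.1 (by rw [h])
        · rcases hic with h | h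
          · exact hxz.1 h.symm
          · exact hzy.1 (by rw [h])
  · -- columns covered by {j, j'}
    obtain ⟨k, hk4, hk1, hk2, hk3⟩ := avoid3 a.1.val b.1.val c.1.val
    set ii : Fin n := ⟨k, by omega⟩ with hiidef
    have hia' : ii ≠ a.1 := fun h => hk1 (by rw [← h])
    have hib' : ii ≠ b.1 := fun h => hk2 (by rw [← h])
    have hic' : ii ≠ c.1 := fun h => hk3 (by rw [← h])
    refine blocked_contra hn hm hX hCt (x := (ii, j)) (y := (ii, j')) ?_ ?_ ?_ ?_ ?_
    · simp only [Set.mem_insert_iff, Set.mem_singleton_iff, Prod.ext_iff, not_or]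
      exact ⟨fun h => hia' h.1, fun h => hib' h.1, fun h => hic' h.1⟩
    · simp only [Set.mem_insert_iff, Set.mem_singleton_iff, Prod.ext_iff, not_or]
      exact ⟨fun h => hia' h.1, fun h => hib' h.1, fun h => hic' h.1⟩
    · intro h; exact hjj' (Prod.ext_iff.mp h).2
    · rw [adj_iff]; rintro ⟨h1, -⟩; exact h1 rfl
    · rintro z (rfl | rfl | rfl) ⟨hxz, hzy⟩ <;> rw [adj_iff] at hxz hzy
      · rcases hja with h | h
        · exact hxz.2 h.symm
        · exact hzy.2 (by rw [h])
      · rcases hjb with h | h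
        · exact hxz.2 h.symm
        · exact hzy.2 (by rw [h])
      · rcases hjc with h | h
        · exact hxz.2 h.symm
        · exact hzy.2 (by rw [h])

include hn hm in
lemma exists_total :
    ∃ X : Set (Fin n × Fin m), IsTotalMutualVisSet (GP n m) X ∧ X.ncard = n * m - 4 := by
  set D : Set (Fin n × Fin m) :=
    {(⟨0, by omega⟩, ⟨0, by omega⟩), (⟨1, by omega⟩, ⟨1, by omega⟩),
     (⟨2, by omega⟩, ⟨2, by omega⟩), (⟨3, by omega⟩, ⟨3, by omega⟩)} with hD
  refine ⟨Dᶜ, ?_, ?_⟩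
  · intro x y
    by_cases hxy : x = y
    · subst hxy; exact visible_of_eq _ _ _
    by_cases hadj : (GP n m).Adj x y
    · exact visible_of_adj _ hadj
    have hrc : x.1 = y.1 ∨ x.2 = y.2 := by
      rw [adj_iff] at hadj
      by_contra hcon
      push_neg at hcon
      exact hadj ⟨hcon.1, hcon.2⟩
    have hz : ∃ k, k < 4 ∧ k ≠ x.1.val ∧ k ≠ y.1.val ∧ k ≠ x.2.val ∧ k ≠ y.2.val := by
      rcases hrc with h | h
      · obtain ⟨k, h4, h1, h2, h3⟩ := avoid3 x.1.val x.2.val y.2.val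
        exact ⟨k, h4, h1, by rw [← h]; exact h1, h2, h3⟩
      · obtain ⟨k, h4, h1, h2, h3⟩ := avoid3 x.2.val x.1.val y.1.val
        exact ⟨k, h4, h2, h3, h1, by rw [← h]; exact h1⟩
    obtain ⟨k, hk4, hk1, hk2, hk3, hk5⟩ := hz
    have z : Fin n × Fin m := (⟨k, by omega⟩, ⟨k, by omega⟩)
    have hzD : ((⟨k, by omega⟩, ⟨k, by omega⟩) : Fin n × Fin m) ∈ D := by
      rw [hD]
      simp only [Set.mem_insert_iff, Set.mem_singleton_iff, Prod.ext_iff, Fin.ext_iff]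
      omega
    refine visible_of_mid hn hm hxy hadj (z := (⟨k, by omega⟩, ⟨k, by omega⟩)) ?_ ?_
      (by simp [hzD])
    · rw [adj_iff]
      exact ⟨fun h => hk1 (by rw [h]), fun h => hk3 (by rw [h])⟩
    · rw [adj_iff]
      exact ⟨fun h => hk2 (by rw [← h]), fun h => hk5 (by rw [← h])⟩
  · have hD4 : D.ncard = 4 := by
      rw [hD]
      rw [Set.ncard_insert_of_notMem (by simp [Prod.ext_iff, Fin.ext_iff]),
        Set.ncard_insert_of_notMem (by simp [Prod.ext_iff, Fin.ext_iff]),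
        Set.ncard_insert_of_notMem (by simp [Prod.ext_iff, Fin.ext_iff]),
        Set.ncard_singleton]
    have := Set.ncard_add_ncard_compl D
    rw [hD4] at this
    simp [Nat.card_prod] at this
    omega

lemma nat_sSup_eq {S : Set ℕ} {k : ℕ} (h1 : k ∈ S) (h2 : ∀ j ∈ S, j ≤ k) : sSup S = k :=
  le_antisymm (csSup_le ⟨k, h1⟩ h2) (le_csSup ⟨k, h2⟩ h1)

end Aux

theorem all_mv_numbers_directProd_complete (n m : ℕ) (hn : 5 ≤ n) (hm : 5 ≤ m) :
    muTotal (directProd (⊤ : SimpleGraph (Fin n)) (⊤ : SimpleGraph (Fin m))) = n * m - 4 ∧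
    muOuter (directProd (⊤ : SimpleGraph (Fin n)) (⊤ : SimpleGraph (Fin m))) = n * m - 4 ∧
    muDual (directProd (⊤ : SimpleGraph (Fin n)) (⊤ : SimpleGraph (Fin m))) = n * m - 4 ∧
    mu (directProd (⊤ : SimpleGraph (Fin n)) (⊤ : SimpleGraph (Fin m))) = n * m - 4 := by
  obtain ⟨X, hXtot, hXcard⟩ := exists_total hn hm
  have hXmv : IsMutualVisSet (GP n m) X := fun x _ y _ => hXtot x y
  unfold muTotal muOuter muDual mu
  refine ⟨?_, ?_, ?_, ?_⟩
  · refine nat_sSup_eq ⟨X, hXtot, hXcard⟩ ?_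
    rintro j ⟨Y, hY, rfl⟩
    exact mv_ncard_le hn hm (fun x _ y _ => hY x y)
  · refine nat_sSup_eq ⟨X, ⟨hXmv, fun x _ y _ => hXtot x y⟩, hXcard⟩ ?_
    rintro j ⟨Y, hY, rfl⟩
    exact mv_ncard_le hn hm hY.1
  · refine nat_sSup_eq ⟨X, ⟨hXmv, fun x _ y _ => hXtot x y⟩, hXcard⟩ ?_
    rintro j ⟨Y, hY, rfl⟩
    exact mv_ncard_le hn hm hY.1
  · refine nat_sSup_eq ⟨X, hXmv, hXcard⟩ ?_
    rintro j ⟨Y, hY, rfl⟩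
    exact mv_ncard_le hn hm hY

end MutualVisibility
end

section
/- Let n ≥ 4 and F ⊆ E(K_n). The set S_F of vertices of L(K_n) corresponding to F is a mutual-visibility set of L(K_n) if and only if the subgraph of K_n formed by the edges F contains no K_4. -/
namespace MutualVisibility

open SimpleGraph

variable {V W : Type*}

private lemma dist_two' {V : Type*} {G : SimpleGraph V} {u v w : V} (hne : u ≠ v)
    (hadj : ¬ G.Adj u v) (h1 : G.Adj u w) (h2 : G.Adj w v) :
    G.dist u v = 2 := by
  have hle : G.dist u v ≤ 2 := by
    simpa using SimpleGraph.dist_le (SimpleGraph.Walk.cons h1 h2.toWalk)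
  have hreach : G.Reachable u v := ⟨SimpleGraph.Walk.cons h1 h2.toWalk⟩
  have h0 : 0 < G.dist u v := hreach.pos_dist_of_ne hne
  have h1' : G.dist u v ≠ 1 := fun h => hadj (SimpleGraph.dist_eq_one_iff_adj.mp h)
  omega

private lemma visible_of_mid_s8 {V : Type*} {G : SimpleGraph V} {X : Set V} {x y m : V}
    (hne : x ≠ y) (hnadj : ¬ G.Adj x y) (h1 : G.Adj x m) (h2 : G.Adj m y)
    (hm : m ∉ X) : Visible G X x y := by
  refine ⟨SimpleGraph.Walk.cons h1 h2.toWalk, ?_, ?_⟩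
  · simp [dist_two' hne hnadj h1 h2, SimpleGraph.Walk.length_cons]
  · intro v hv hvx hvy
    simp only [SimpleGraph.Walk.support_cons, SimpleGraph.Adj.toWalk,
      SimpleGraph.Walk.support_nil, List.mem_cons, List.mem_singleton] at hv
    rcases hv with rfl | rfl | rfl | h
    · exact absurd rfl hvx
    · exact hm
    · exact absurd rfl hvy
    · simp at h


private lemma dist_two_edges {n : ℕ} {x y : (⊤ : SimpleGraph (Fin n)).edgeSet} {a b c d : Fin n}
    (hxv : (x : Sym2 (Fin n)) = s(a,b)) (hyv : (y : Sym2 (Fin n)) = s(c,d))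
    (hab : a ≠ b) (hcd : c ≠ d) (hac : a ≠ c) (had : a ≠ d) (hbc : b ≠ c) (hbd : b ≠ d) :
    (⊤ : SimpleGraph (Fin n)).lineGraph.dist x y = 2 := by
  have hmem : s(a,c) ∈ (⊤ : SimpleGraph (Fin n)).edgeSet := by
    rw [SimpleGraph.mem_edgeSet]; exact hac
  set m : (⊤ : SimpleGraph (Fin n)).edgeSet := ⟨s(a,c), hmem⟩ with hmdef
  have hne : x ≠ y := by
    intro h
    have : (x : Sym2 (Fin n)) = (y : Sym2 (Fin n)) := by rw [h]
    rw [hxv, hyv, Sym2.eq_iff] at this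
    rcases this with ⟨h1, h2⟩ | ⟨h1, h2⟩
    · exact absurd h1 hac
    · exact absurd h1 had
  have hnadj : ¬ (⊤ : SimpleGraph (Fin n)).lineGraph.Adj x y := by
    rintro ⟨_, v, hv1, hv2⟩
    rw [hxv] at hv1; rw [hyv] at hv2
    simp only [SetLike.mem_coe, Sym2.mem_iff] at hv1 hv2
    rcases hv1 with rfl | rfl <;> rcases hv2 with rfl | rfl <;> simp_all
  have h1 : (⊤ : SimpleGraph (Fin n)).lineGraph.Adj x m := by
    constructor
    · intro h
      have : (x : Sym2 (Fin n)) = s(a,c) := by rw [h]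
      rw [hxv, Sym2.eq_iff] at this
      rcases this with ⟨h1, h2⟩ | ⟨h1, h2⟩
      · exact hbc h2
      · exact hac h1
    · exact ⟨a, by simp [hxv], by simp [hmdef]⟩
  have h2 : (⊤ : SimpleGraph (Fin n)).lineGraph.Adj m y := by
    constructor
    · intro h
      have : s(a,c) = (y : Sym2 (Fin n)) := by rw [← h]
      rw [hyv, Sym2.eq_iff] at this
      rcases this with ⟨h1, h2⟩ | ⟨h1, h2⟩
      · exact hac h1
      · exact had h1
    · exact ⟨c, by simp [hmdef], by simp [hyv]⟩
  exact dist_two' hne hnadj h1 h2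

private lemma nadj_edges {n : ℕ} {x y : (⊤ : SimpleGraph (Fin n)).edgeSet} {a b c d : Fin n}
    (hxv : (x : Sym2 (Fin n)) = s(a,b)) (hyv : (y : Sym2 (Fin n)) = s(c,d))
    (hac : a ≠ c) (had : a ≠ d) (hbc : b ≠ c) (hbd : b ≠ d) :
    ¬ (⊤ : SimpleGraph (Fin n)).lineGraph.Adj x y := by
  rintro ⟨_, v, hv1, hv2⟩
  rw [hxv] at hv1; rw [hyv] at hv2
  simp only [SetLike.mem_coe, Sym2.mem_iff] at hv1 hv2
  rcases hv1 with rfl | rfl <;> rcases hv2 with rfl | rfl <;> simp_all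

private lemma visible_cross {n : ℕ} {X : Set ((⊤ : SimpleGraph (Fin n)).edgeSet)}
    {x y : (⊤ : SimpleGraph (Fin n)).edgeSet} {a b c d : Fin n}
    (hxv : (x : Sym2 (Fin n)) = s(a,b)) (hyv : (y : Sym2 (Fin n)) = s(c,d))
    (hab : a ≠ b) (hcd : c ≠ d) (hac : a ≠ c) (had : a ≠ d) (hbc : b ≠ c) (hbd : b ≠ d)
    (hm : ∀ m : (⊤ : SimpleGraph (Fin n)).edgeSet, (m : Sym2 (Fin n)) = s(a,c) → m ∉ X) :
    Visible (⊤ : SimpleGraph (Fin n)).lineGraph X x y := by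
  have hmem : s(a,c) ∈ (⊤ : SimpleGraph (Fin n)).edgeSet := by
    rw [SimpleGraph.mem_edgeSet]; exact hac
  set m : (⊤ : SimpleGraph (Fin n)).edgeSet := ⟨s(a,c), hmem⟩ with hmdef
  have hne : x ≠ y := by
    intro h
    apply hac
    have : (x : Sym2 (Fin n)) = (y : Sym2 (Fin n)) := by rw [h]
    rw [hxv, hyv, Sym2.eq_iff] at this
    rcases this with ⟨h1, h2⟩ | ⟨h1, h2⟩
    · exact absurd h1 hac
    · exact absurd h1 had
  have hnadj : ¬ (⊤ : SimpleGraph (Fin n)).lineGraph.Adj x y := by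
    rintro ⟨_, v, hv1, hv2⟩
    rw [hxv] at hv1; rw [hyv] at hv2
    simp only [SetLike.mem_coe, Sym2.mem_iff] at hv1 hv2
    rcases hv1 with rfl | rfl <;> rcases hv2 with rfl | rfl <;> simp_all
  have h1 : (⊤ : SimpleGraph (Fin n)).lineGraph.Adj x m := by
    constructor
    · intro h
      have : (x : Sym2 (Fin n)) = s(a,c) := by rw [h]
      rw [hxv, Sym2.eq_iff] at this
      rcases this with ⟨h1, h2⟩ | ⟨h1, h2⟩
      · exact hbc h2
      · exact hac h1
    · exact ⟨a, by simp [hxv], by simp [hmdef]⟩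
  have h2 : (⊤ : SimpleGraph (Fin n)).lineGraph.Adj m y := by
    constructor
    · intro h
      have : s(a,c) = (y : Sym2 (Fin n)) := by rw [← h]
      rw [hyv, Sym2.eq_iff] at this
      rcases this with ⟨h1, h2⟩ | ⟨h1, h2⟩
      · exact hac h1
      · exact had h1
    · exact ⟨c, by simp [hmdef], by simp [hyv]⟩
  exact visible_of_mid_s8 hne hnadj h1 h2 (hm m rfl)

theorem mv_set_lineGraph_complete_iff_K4_free (n : ℕ) (hn : 4 ≤ n)
    (F : Set (Sym2 (Fin n))) (hF : F ⊆ (⊤ : SimpleGraph (Fin n)).edgeSet) :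
    IsMutualVisSet (⊤ : SimpleGraph (Fin n)).lineGraph
      {e : (⊤ : SimpleGraph (Fin n)).edgeSet | (e : Sym2 (Fin n)) ∈ F} ↔
    ¬ ContainsCopy (⊤ : SimpleGraph (Fin 4)) (SimpleGraph.fromEdgeSet F) := by
  constructor
  · rintro hMV ⟨g, hg, hadjc⟩
    have hmemF : ∀ i j : Fin 4, i ≠ j → s(g i, g j) ∈ F := by
      intro i j hij
      have := hadjc i j (by simpa using hij)
      rw [SimpleGraph.fromEdgeSet_adj] at this
      exact this.1
    have hd : ∀ i j : Fin 4, i ≠ j → g i ≠ g j := fun i j hij h => hij (hg h)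
    have h01 := hd 0 1 (by decide)
    have h02 := hd 0 2 (by decide)
    have h03 := hd 0 3 (by decide)
    have h12 := hd 1 2 (by decide)
    have h13 := hd 1 3 (by decide)
    have h23 := hd 2 3 (by decide)
    have hxe : s(g 0, g 1) ∈ (⊤ : SimpleGraph (Fin n)).edgeSet := by
      rw [SimpleGraph.mem_edgeSet]; exact h01
    have hye : s(g 2, g 3) ∈ (⊤ : SimpleGraph (Fin n)).edgeSet := by
      rw [SimpleGraph.mem_edgeSet]; exact h23
    obtain ⟨p, hlen, hsupp⟩ := hMV ⟨s(g 0, g 1), hxe⟩ (hmemF 0 1 (by decide))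
      ⟨s(g 2, g 3), hye⟩ (hmemF 2 3 (by decide))
    rw [dist_two_edges rfl rfl h01 h23 h02 h03 h12 h13] at hlen
    have hA1 := p.adj_getVert_succ (i := 0) (by omega)
    have hA2 := p.adj_getVert_succ (i := 1) (by omega)
    rw [p.getVert_zero] at hA1
    have h2y : p.getVert 2 = ⟨s(g 2, g 3), hye⟩ := by rw [← hlen]; exact p.getVert_length
    rw [h2y] at hA2
    have hmX := hsupp (p.getVert 1) (SimpleGraph.Walk.mem_support_iff_exists_getVert.mpr ⟨1, rfl, by omega⟩) (hA1.ne') (hA2.ne)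
    obtain ⟨_, u, hu1, hu2⟩ := hA1
    obtain ⟨_, v, hv1, hv2⟩ := hA2
    simp only [SetLike.mem_coe, Sym2.mem_iff] at hu1 hu2 hv1 hv2
    apply hmX
    simp only [Set.mem_setOf_eq]
    rcases hu1 with rfl | rfl <;> rcases hv2 with rfl | rfl
    · rw [(Sym2.mem_and_mem_iff h02).mp ⟨hu2, hv1⟩]
      exact hmemF 0 2 (by decide)
    · rw [(Sym2.mem_and_mem_iff h03).mp ⟨hu2, hv1⟩]
      exact hmemF 0 3 (by decide)
    · rw [(Sym2.mem_and_mem_iff h12).mp ⟨hu2, hv1⟩]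
      exact hmemF 1 2 (by decide)
    · rw [(Sym2.mem_and_mem_iff h13).mp ⟨hu2, hv1⟩]
      exact hmemF 1 3 (by decide)
  · intro hK4 x hx y hy
    obtain ⟨xe, hxe⟩ := x
    obtain ⟨ye, hye⟩ := y
    induction xe using Sym2.ind with | _ a b => ?_
    induction ye using Sym2.ind with | _ c d => ?_
    have hab : a ≠ b := by rw [SimpleGraph.mem_edgeSet] at hxe; exact hxe
    have hcd : c ≠ d := by rw [SimpleGraph.mem_edgeSet] at hye; exact hye
    have hxF : s(a, b) ∈ F := hx
    have hyF : s(c, d) ∈ F := hy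
    by_cases heq : (⟨s(a,b), hxe⟩ : (⊤ : SimpleGraph (Fin n)).edgeSet) = ⟨s(c,d), hye⟩
    · rw [heq]
      refine ⟨SimpleGraph.Walk.nil, by simp [SimpleGraph.dist_self], ?_⟩
      intro v hv h1 h2
      simp only [SimpleGraph.Walk.support_nil, List.mem_singleton] at hv
      exact absurd hv h1
    by_cases hadj : (⊤ : SimpleGraph (Fin n)).lineGraph.Adj ⟨s(a,b), hxe⟩ ⟨s(c,d), hye⟩
    · refine ⟨hadj.toWalk, by simp [SimpleGraph.dist_eq_one_iff_adj.mpr hadj], ?_⟩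
      intro v hv h1 h2
      simp only [SimpleGraph.Adj.toWalk, SimpleGraph.Walk.support_cons,
        SimpleGraph.Walk.support_nil, List.mem_cons, List.mem_singleton] at hv
      rcases hv with rfl | rfl | h
      · exact absurd rfl h1
      · exact absurd rfl h2
      · simp at h
    have hshare : ∀ v : Fin n, v ∈ s(a,b) → v ∈ s(c,d) → False := by
      intro v h1 h2
      exact hadj ⟨heq, v, by simpa using h1, by simpa using h2⟩
    have hac : a ≠ c := fun h => hshare a (by simp) (by rw [h]; simp)
    have had : a ≠ d := fun h => hshare a (by simp) (by rw [h]; simp)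
    have hbc : b ≠ c := fun h => hshare b (by simp) (by rw [h]; simp)
    have hbd : b ≠ d := fun h => hshare b (by simp) (by rw [h]; simp)
    by_cases hc1 : s(a, c) ∈ F
    · by_cases hc2 : s(a, d) ∈ F
      · by_cases hc3 : s(b, c) ∈ F
        · by_cases hc4 : s(b, d) ∈ F
          · exfalso
            apply hK4
            have hba : s(b, a) ∈ F := by rwa [Sym2.eq_swap]
            have hdc : s(d, c) ∈ F := by rwa [Sym2.eq_swap]
            have hca : s(c, a) ∈ F := by rwa [Sym2.eq_swap]
            have hda : s(d, a) ∈ F := by rwa [Sym2.eq_swap]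
            have hcb : s(c, b) ∈ F := by rwa [Sym2.eq_swap]
            have hdb : s(d, b) ∈ F := by rwa [Sym2.eq_swap]
            have hba' : b ≠ a := hab.symm
            have hca' : c ≠ a := hac.symm
            have hcb' : c ≠ b := hbc.symm
            have hda' : d ≠ a := had.symm
            have hdb' : d ≠ b := hbd.symm
            have hdc' : d ≠ c := hcd.symm
            refine ⟨![a, b, c, d], ?_, ?_⟩
            · intro i j hij
              fin_cases i <;> fin_cases j <;> simp_all
            · intro i j hij
              rw [SimpleGraph.top_adj] at hij
              rw [SimpleGraph.fromEdgeSet_adj]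
              fin_cases i <;> fin_cases j <;> simp_all
          · exact visible_cross (Sym2.eq_swap) (Sym2.eq_swap) hab.symm hcd.symm hbd hbc had hac
              (fun m hm hmX => hc4 (by rwa [Set.mem_setOf_eq, hm] at hmX))
        · exact visible_cross (Sym2.eq_swap) rfl hab.symm hcd hbc hbd hac had
            (fun m hm hmX => hc3 (by rwa [Set.mem_setOf_eq, hm] at hmX))
      · exact visible_cross rfl (Sym2.eq_swap) hab hcd.symm had hac hbd hbc
          (fun m hm hmX => hc2 (by rwa [Set.mem_setOf_eq, hm] at hmX))
    · exact visible_cross rfl rfl hab hcd hac had hbc hbd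
        (fun m hm hmX => hc1 (by rwa [Set.mem_setOf_eq, hm] at hmX))
end MutualVisibility
end

section
/- For n ≥ 3, the mutual-visibility number of L(K_n) equals the number of edges of the Turán graph T(n,3), i.e., μ(L(K_n)) = e(T(n,3)). -/
namespace MutualVisibility

open SimpleGraph

variable {V W : Type*}

section Aux

variable {n : ℕ}


lemma mem_topEdge {a b : Fin n} (h : a ≠ b) : s(a,b) ∈ (⊤ : SimpleGraph (Fin n)).edgeSet := by
  simp [h]

lemma edge_rep (e : (⊤ : SimpleGraph (Fin n)).edgeSet) :
    ∃ a b : Fin n, a ≠ b ∧ e.val = s(a,b) := by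
  obtain ⟨e, he⟩ := e
  induction e using Sym2.ind with
  | _ a b => exact ⟨a, b, by simpa using he, rfl⟩

lemma not_adj_cases {a b c d : Fin n} {e f : (⊤ : SimpleGraph (Fin n)).edgeSet}
    (he : e.val = s(a,b)) (hf : f.val = s(c,d))
    (h : ¬ (⊤ : SimpleGraph (Fin n)).lineGraph.Adj e f) (hne : e ≠ f) :
    a ≠ c ∧ a ≠ d ∧ b ≠ c ∧ b ≠ d := by
  rw [lineGraph_adj_iff_exists] at h
  push_neg at h
  have h' := h hne
  refine ⟨?_, ?_, ?_, ?_⟩ <;> rintro rfl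
  · exact h' a (by simp [he]) (by simp [hf])
  · exact h' a (by simp [he]) (by simp [hf])
  · exact h' b (by simp [he]) (by simp [hf])
  · exact h' b (by simp [he]) (by simp [hf])

lemma dist_eq_two_aux {V : Type*} {G : SimpleGraph V} {e f g : V}
    (hne : e ≠ f) (hef : ¬ G.Adj e f) (h1 : G.Adj e g) (h2 : G.Adj g f) :
    G.dist e f = 2 := by
  have hle : G.dist e f ≤ 2 := by
    have := SimpleGraph.dist_le (Walk.cons h1 (Walk.cons h2 Walk.nil))
    simpa using this
  have h0 : G.dist e f ≠ 0 := by
    rw [ne_eq, Reachable.dist_eq_zero_iff ⟨Walk.cons h1 (Walk.cons h2 Walk.nil)⟩]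
    exact hne
  have h1' : G.dist e f ≠ 1 := fun h => hef (dist_eq_one_iff_adj.mp h)
  omega

lemma exists_middle {V : Type*} {G : SimpleGraph V} {X : Set V} {e f : V}
    (hvis : ∃ p : G.Walk e f, p.length = G.dist e f ∧
      ∀ v ∈ p.support, v ≠ e → v ≠ f → v ∉ X)
    (hd : G.dist e f = 2) :
    ∃ g, G.Adj e g ∧ G.Adj g f ∧ g ∉ X := by
  obtain ⟨p, hlen, hsupp⟩ := hvis
  rw [hd] at hlen
  match p, hlen with
  | Walk.cons (v := g) h1 (Walk.cons h2 Walk.nil), _ =>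
    exact ⟨g, h1, h2, hsupp g (by simp) h1.ne' h2.ne⟩

def graphOf (X : Set (⊤ : SimpleGraph (Fin n)).edgeSet) : SimpleGraph (Fin n) where
  Adj a b := ∃ h : a ≠ b, (⟨s(a,b), mem_topEdge h⟩ : (⊤ : SimpleGraph (Fin n)).edgeSet) ∈ X
  symm := ⟨by
    rintro a b ⟨h, hx⟩
    refine ⟨h.symm, ?_⟩
    have : (⟨s(b,a), mem_topEdge h.symm⟩ : (⊤ : SimpleGraph (Fin n)).edgeSet)
        = ⟨s(a,b), mem_topEdge h⟩ := Subtype.ext (Sym2.eq_swap)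
    rw [this]; exact hx⟩
  loopless := ⟨fun a ⟨h, _⟩ => h rfl⟩

lemma graphOf_image (X : Set (⊤ : SimpleGraph (Fin n)).edgeSet) :
    Subtype.val '' X = (graphOf X).edgeSet := by
  ext s
  induction s using Sym2.ind with
  | _ a b =>
    simp only [Set.mem_image, mem_edgeSet]
    constructor
    · rintro ⟨e, heX, hval⟩
      obtain ⟨x, y, hxy, hrep⟩ := edge_rep e
      have hab : a ≠ b := by
        have := e.property; rw [hval] at this; simpa using this
      show ∃ h : a ≠ b, (⟨s(a,b), mem_topEdge h⟩ : (⊤ : SimpleGraph (Fin n)).edgeSet) ∈ X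
      refine ⟨hab, ?_⟩
      have : (⟨s(a,b), mem_topEdge hab⟩ : (⊤ : SimpleGraph (Fin n)).edgeSet) = e :=
        Subtype.ext hval.symm
      rw [this]; exact heX
    · rintro (⟨h, hx⟩ : ∃ h : a ≠ b, (⟨s(a,b), mem_topEdge h⟩ : (⊤ : SimpleGraph (Fin n)).edgeSet) ∈ X)
      exact ⟨_, hx, rfl⟩

lemma ncard_eq (X : Set (⊤ : SimpleGraph (Fin n)).edgeSet) :
    X.ncard = (graphOf X).edgeSet.ncard := by
  rw [← graphOf_image, Set.ncard_image_of_injective _ Subtype.val_injective]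

lemma sym2_ne' {α : Type*} {a b c d : α} (h1 : a ≠ c) (h2 : a ≠ d) : s(a,b) ≠ s(c,d) := by
  intro h
  rcases Sym2.eq_iff.mp h with ⟨h,-⟩ | ⟨h,-⟩
  exacts [h1 h, h2 h]

lemma sym2_eq_of {α : Type*} {x y u w : α} (hu : u = x ∨ u = y) (hw : w = x ∨ w = y)
    (huw : u ≠ w) : s(x,y) = s(u,w) := by
  rcases hu with rfl | rfl <;> rcases hw with rfl | rfl
  · exact absurd rfl huw
  · rfl
  · exact Sym2.eq_swap.symm
  · exact absurd rfl huw

lemma cliqueFree_of_mutualVis {X : Set (⊤ : SimpleGraph (Fin n)).edgeSet}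
    (hX : IsMutualVisSet (⊤ : SimpleGraph (Fin n)).lineGraph X) :
    (graphOf X).CliqueFree 4 := by
  rw [cliqueFree_iff]
  constructor
  intro F
  have hF : ∀ i j : Fin 4, i ≠ j → ∃ h : F i ≠ F j,
      (⟨s(F i, F j), mem_topEdge h⟩ : (⊤ : SimpleGraph (Fin n)).edgeSet) ∈ X := by
    intro i j h
    exact F.toHom.map_adj (by simpa using h)
  set a := F 0; set b := F 1; set c := F 2; set d := F 3
  obtain ⟨hab, hAB⟩ := hF 0 1 (by decide)
  obtain ⟨hcd, hCD⟩ := hF 2 3 (by decide)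
  obtain ⟨hac, hAC⟩ := hF 0 2 (by decide)
  obtain ⟨had, hAD⟩ := hF 0 3 (by decide)
  obtain ⟨hbc, hBC⟩ := hF 1 2 (by decide)
  obtain ⟨hbd, hBD⟩ := hF 1 3 (by decide)
  set eAB : (⊤ : SimpleGraph (Fin n)).edgeSet := ⟨s(a,b), mem_topEdge hab⟩ with heAB
  set eCD : (⊤ : SimpleGraph (Fin n)).edgeSet := ⟨s(c,d), mem_topEdge hcd⟩ with heCD
  set gAC : (⊤ : SimpleGraph (Fin n)).edgeSet := ⟨s(a,c), mem_topEdge hac⟩ with hgAC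
  have hnef : eAB ≠ eCD := fun h => sym2_ne' hac had (congrArg Subtype.val h)
  have hnadj : ¬ (⊤ : SimpleGraph (Fin n)).lineGraph.Adj eAB eCD := by
    rw [lineGraph_adj_iff_exists]
    rintro ⟨-, v, hv1, hv2⟩
    simp only [heAB, heCD, Sym2.mem_iff] at hv1 hv2
    rcases hv1 with rfl | rfl <;> rcases hv2 with h | h
    exacts [hac h, had h, hbc h, hbd h]
  have hadj1 : (⊤ : SimpleGraph (Fin n)).lineGraph.Adj eAB gAC := by
    refine lineGraph_adj_iff_exists.mpr ⟨?_, a, by simp [heAB], by simp [hgAC]⟩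
    intro h
    rcases Sym2.eq_iff.mp (congrArg Subtype.val h) with ⟨-, h'⟩ | ⟨h', -⟩
    exacts [hbc h', hac h']
  have hadj2 : (⊤ : SimpleGraph (Fin n)).lineGraph.Adj gAC eCD := by
    refine lineGraph_adj_iff_exists.mpr ⟨?_, c, by simp [hgAC], by simp [heCD]⟩
    intro h
    rcases Sym2.eq_iff.mp (congrArg Subtype.val h) with ⟨h', -⟩ | ⟨h', -⟩
    exacts [hac h', had h']
  have hdist : (⊤ : SimpleGraph (Fin n)).lineGraph.dist eAB eCD = 2 :=
    dist_eq_two_aux hnef hnadj hadj1 hadj2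
  obtain ⟨g, hg1, hg2, hgX⟩ := exists_middle (hX eAB hAB eCD hCD) hdist
  -- analyze g
  obtain ⟨x, y, hxy, hrep⟩ := edge_rep g
  obtain ⟨-, u, hu1, hu2⟩ := lineGraph_adj_iff_exists.mp hg1
  obtain ⟨-, w, hw1, hw2⟩ := lineGraph_adj_iff_exists.mp hg2
  rw [hrep] at hu2 hw1
  rw [heAB] at hu1; rw [heCD] at hw2
  simp only [Sym2.mem_iff] at hu1 hu2 hw1 hw2
  have huw : u ≠ w := by
    rintro rfl
    rcases hu1 with rfl | rfl <;> rcases hw2 with h | h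
    exacts [hac h, had h, hbc h, hbd h]
  have hgval : g.val = s(u, w) := by rw [hrep]; exact sym2_eq_of hu2 hw1 huw
  apply hgX
  rcases hu1 with rfl | rfl <;> rcases hw2 with rfl | rfl
  · exact (Subtype.ext (hgval.trans rfl) : g = ⟨s(a,c), mem_topEdge hac⟩) ▸ hAC
  · exact (Subtype.ext (hgval.trans rfl) : g = ⟨s(a,d), mem_topEdge had⟩) ▸ hAD
  · exact (Subtype.ext (hgval.trans rfl) : g = ⟨s(b,c), mem_topEdge hbc⟩) ▸ hBC
  · exact (Subtype.ext (hgval.trans rfl) : g = ⟨s(b,d), mem_topEdge hbd⟩) ▸ hBD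

lemma ncard_le_turan {X : Set (⊤ : SimpleGraph (Fin n)).edgeSet}
    (hX : IsMutualVisSet (⊤ : SimpleGraph (Fin n)).lineGraph X) :
    X.ncard ≤ (turanGraph n 3).edgeSet.ncard := by
  classical
  rw [ncard_eq X]
  have h := (isTuranMaximal_turanGraph (n := n) (by norm_num : (0:ℕ) < 3)).2
    (cliqueFree_of_mutualVis hX)
  rw [Set.ncard_eq_toFinset_card', Set.ncard_eq_toFinset_card']
  simpa [edgeFinset] using h

lemma exists_nonadj {a b c d : Fin n} (hab : (turanGraph n 3).Adj a b)
    (hcd : (turanGraph n 3).Adj c d) (hac : a ≠ c) (had : a ≠ d) (hbc : b ≠ c) (hbd : b ≠ d) :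
    ∃ u w, (u = a ∨ u = b) ∧ (w = c ∨ w = d) ∧ ¬ (turanGraph n 3).Adj u w := by
  by_contra h
  push_neg at h
  have hab' : a ≠ b := hab.ne
  have hcd' : c ≠ d := hcd.ne
  have hclique : (turanGraph n 3).IsNClique 4 {a,b,c,d} := by
    constructor
    · intro x hx y hy hxy
      simp only [Finset.coe_insert, Set.mem_insert_iff, Finset.coe_singleton,
        Set.mem_singleton_iff] at hx hy
      rcases hx with rfl|rfl|rfl|rfl <;> rcases hy with rfl|rfl|rfl|rfl <;>
        first
          | exact absurd rfl hxy
          | exact hab | exact hab.symm | exact hcd | exact hcd.symm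
          | exact h _ _ (Or.inl rfl) (Or.inl rfl) | exact h _ _ (Or.inl rfl) (Or.inr rfl)
          | exact h _ _ (Or.inr rfl) (Or.inl rfl) | exact h _ _ (Or.inr rfl) (Or.inr rfl)
          | exact (h _ _ (Or.inl rfl) (Or.inl rfl)).symm
          | exact (h _ _ (Or.inl rfl) (Or.inr rfl)).symm
          | exact (h _ _ (Or.inr rfl) (Or.inl rfl)).symm
          | exact (h _ _ (Or.inr rfl) (Or.inr rfl)).symm
    · rw [Finset.card_insert_of_notMem (by simp [hab', hac, had]),
        Finset.card_insert_of_notMem (by simp [hbc, hbd]),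
        Finset.card_insert_of_notMem (by simp [hcd']), Finset.card_singleton]
  exact turanGraph_cliqueFree (by norm_num) _ hclique

lemma mutualVis_X0 :
    IsMutualVisSet (⊤ : SimpleGraph (Fin n)).lineGraph
      {e : (⊤ : SimpleGraph (Fin n)).edgeSet | e.val ∈ (turanGraph n 3).edgeSet} := by
  intro e he f hf
  by_cases hef : e = f
  · subst hef
    refine ⟨Walk.nil, by simp [SimpleGraph.dist_self], ?_⟩
    intro v hv h1 _
    simp only [Walk.support_nil, List.mem_singleton] at hv
    exact absurd hv h1
  by_cases hadj : (⊤ : SimpleGraph (Fin n)).lineGraph.Adj e f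
  · refine ⟨hadj.toWalk, by rw [dist_eq_one_iff_adj.mpr hadj]; rfl, ?_⟩
    intro v hv h1 h2
    simp only [Adj.toWalk, Walk.support_cons, Walk.support_nil, List.mem_cons,
      List.mem_singleton, List.not_mem_nil, or_false] at hv
    rcases hv with rfl | rfl
    exacts [absurd rfl h1, absurd rfl h2]
  · obtain ⟨a, b, hab, hrepe⟩ := edge_rep e
    obtain ⟨c, d, hcd, hrepf⟩ := edge_rep f
    obtain ⟨hac, had, hbc, hbd⟩ := not_adj_cases hrepe hrepf hadj hef
    have heT : (turanGraph n 3).Adj a b := by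
      have := he; rw [Set.mem_setOf_eq, hrepe, mem_edgeSet] at this; exact this
    have hfT : (turanGraph n 3).Adj c d := by
      have := hf; rw [Set.mem_setOf_eq, hrepf, mem_edgeSet] at this; exact this
    obtain ⟨u, w, hu, hw, hnadjuw⟩ := exists_nonadj heT hfT hac had hbc hbd
    have huw : u ≠ w := by
      rcases hu with rfl | rfl <;> rcases hw with rfl | rfl <;> assumption
    set g : (⊤ : SimpleGraph (Fin n)).edgeSet := ⟨s(u,w), mem_topEdge huw⟩ with hg
    have hadj1 : (⊤ : SimpleGraph (Fin n)).lineGraph.Adj e g := by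
      refine lineGraph_adj_iff_exists.mpr ⟨?_, u, by simp [hrepe, hu], by simp [hg]⟩
      intro hcon
      have : w ∈ (e : Sym2 (Fin n)) := by rw [hcon]; simp [hg]
      rw [hrepe, Sym2.mem_iff] at this
      rcases hw with rfl | rfl <;> rcases this with h' | h'
      exacts [hac h'.symm, hbc h'.symm, had h'.symm, hbd h'.symm]
    have hadj2 : (⊤ : SimpleGraph (Fin n)).lineGraph.Adj g f := by
      refine lineGraph_adj_iff_exists.mpr ⟨?_, w, by simp [hg], by simp [hrepf, hw]⟩
      intro hcon
      have : u ∈ (f : Sym2 (Fin n)) := by rw [← hcon]; simp [hg]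
      rw [hrepf, Sym2.mem_iff] at this
      rcases hu with rfl | rfl <;> rcases this with h' | h'
      exacts [hac h', had h', hbc h', hbd h']
    refine ⟨Walk.cons hadj1 (Walk.cons hadj2 Walk.nil), ?_, ?_⟩
    · rw [dist_eq_two_aux hef hadj hadj1 hadj2]; rfl
    · intro v hv h1 h2
      simp only [Walk.support_cons, Walk.support_nil, List.mem_cons, List.mem_singleton,
        List.not_mem_nil, or_false] at hv
      rcases hv with rfl | rfl | rfl
      · exact absurd rfl h1
      · rw [Set.mem_setOf_eq, hg, mem_edgeSet]
        exact hnadjuw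
      · exact absurd rfl h2

lemma ncard_X0 :
    ({e : (⊤ : SimpleGraph (Fin n)).edgeSet | e.val ∈ (turanGraph n 3).edgeSet}).ncard
      = (turanGraph n 3).edgeSet.ncard := by
  rw [← Set.ncard_image_of_injective _ Subtype.val_injective]
  congr 1
  ext s
  simp only [Set.mem_image, Set.mem_setOf_eq]
  constructor
  · rintro ⟨e, he, rfl⟩; exact he
  · intro hs
    induction s using Sym2.ind with
    | _ x y =>
      have hxy : x ≠ y := ((turanGraph n 3).mem_edgeSet.mp hs).ne
      exact ⟨⟨s(x,y), mem_topEdge hxy⟩, hs, rfl⟩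

theorem mu_lineGraph_complete_eq_turan (n : ℕ) (hn : 3 ≤ n) :
    mu (⊤ : SimpleGraph (Fin n)).lineGraph = (turanGraph n 3).edgeSet.ncard := by
  have hub : ∀ k ∈ {k | ∃ X : Set ((⊤ : SimpleGraph (Fin n)).edgeSet),
      IsMutualVisSet (⊤ : SimpleGraph (Fin n)).lineGraph X ∧ X.ncard = k},
      k ≤ (turanGraph n 3).edgeSet.ncard := by
    rintro k ⟨X, hX, rfl⟩
    exact ncard_le_turan hX
  have hmem : (turanGraph n 3).edgeSet.ncard ∈
      {k | ∃ X : Set ((⊤ : SimpleGraph (Fin n)).edgeSet),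
        IsMutualVisSet (⊤ : SimpleGraph (Fin n)).lineGraph X ∧ X.ncard = k} :=
    ⟨_, mutualVis_X0, ncard_X0⟩
  exact le_antisymm (csSup_le ⟨_, hmem⟩ hub) (le_csSup ⟨_, hub⟩ hmem)

end Aux
end MutualVisibility
end

section
/- For any n ≥ 3, μ_t(L(K_n)) ≥ n − 1 + ⌊(n−1)/2⌋. -/
namespace MutualVisibility

open SimpleGraph

variable {V W : Type*}

/-! ### Auxiliary material for the lower bound on `muTotal (L(K_n))` -/

section MVAux

variable {n : ℕ}

/-- matching edges: `{a, a+1}` with `a` odd -/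
def MVMat (n : ℕ) (e : Sym2 (Fin n)) : Prop :=
  ∃ a b : Fin n, e = s(a, b) ∧ (a : ℕ) % 2 = 1 ∧ (b : ℕ) = (a : ℕ) + 1

lemma mvmat_unique {e e' : Sym2 (Fin n)} {v : Fin n} (he : MVMat n e) (he' : MVMat n e')
    (hv : v ∈ e) (hv' : v ∈ e') : e = e' := by
  obtain ⟨a, b, rfl, ha, hb⟩ := he
  obtain ⟨a', b', rfl, ha', hb'⟩ := he'
  rw [Sym2.mem_iff] at hv hv'
  have hab : a = a' ∧ b = b' := by
    rcases hv with rfl | rfl <;> rcases hv' with h | h <;>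
      constructor <;> (apply Fin.ext; rw [Fin.ext_iff] at h; omega)
  rw [hab.1, hab.2]

/-- the candidate total mutual-visibility set: edges through the vertex `0`
together with the matching edges -/
def MVX (n : ℕ) : Set ((⊤ : SimpleGraph (Fin n)).edgeSet) :=
  {e | (∃ v ∈ (e : Sym2 (Fin n)), (v : ℕ) = 0) ∨ MVMat n (e : Sym2 (Fin n))}

lemma mv_exists_rep (e : (⊤ : SimpleGraph (Fin n)).edgeSet) :
    ∃ a b : Fin n, a ≠ b ∧ (e : Sym2 (Fin n)) = s(a, b) := by
  obtain ⟨a, b, hab⟩ : ∃ a b : Fin n, (e : Sym2 (Fin n)) = s(a, b) :=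
    Sym2.ind (fun a b => ⟨a, b, rfl⟩) e.1
  refine ⟨a, b, ?_, hab⟩
  have := e.2
  rw [hab, SimpleGraph.mem_edgeSet, top_adj] at this
  exact this

lemma mv_key (e f : (⊤ : SimpleGraph (Fin n)).edgeSet)
    (hdisj : ¬ ∃ v, v ∈ (e : Sym2 (Fin n)) ∧ v ∈ (f : Sym2 (Fin n)))
    (hf0 : ∀ v ∈ (f : Sym2 (Fin n)), (v : ℕ) ≠ 0) :
    ∃ g : (⊤ : SimpleGraph (Fin n)).edgeSet, g ∉ MVX n ∧
      (⊤ : SimpleGraph (Fin n)).lineGraph.Adj e g ∧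
      (⊤ : SimpleGraph (Fin n)).lineGraph.Adj g f := by
  obtain ⟨a, b, hab, he⟩ := mv_exists_rep e
  obtain ⟨c, d, hcd, hf⟩ := mv_exists_rep f
  obtain ⟨u, hu, hu0⟩ : ∃ u, u ∈ (e : Sym2 (Fin n)) ∧ (u : ℕ) ≠ 0 := by
    by_cases h : (a : ℕ) = 0
    · exact ⟨b, by rw [he]; simp, fun hb0 => hab (Fin.ext (by omega))⟩
    · exact ⟨a, by rw [he]; simp, h⟩
  have huc : u ≠ c := fun h => hdisj ⟨u, hu, by rw [hf, h]; simp⟩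
  have hud : u ≠ d := fun h => hdisj ⟨u, hu, by rw [hf, h]; simp⟩
  have hmem1 : s(u, c) ∈ (⊤ : SimpleGraph (Fin n)).edgeSet := by
    rw [SimpleGraph.mem_edgeSet, top_adj]; exact huc
  have hmem2 : s(u, d) ∈ (⊤ : SimpleGraph (Fin n)).edgeSet := by
    rw [SimpleGraph.mem_edgeSet, top_adj]; exact hud
  have hne12 : s(u, c) ≠ s(u, d) := by
    intro h
    rw [Sym2.eq_iff] at h
    rcases h with ⟨-, h⟩ | ⟨h, -⟩
    · exact hcd h
    · exact hud h
  obtain ⟨w, hwf, hwmem, hmat⟩ :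
      ∃ w : Fin n, w ∈ (f : Sym2 (Fin n)) ∧ s(u, w) ∈ (⊤ : SimpleGraph (Fin n)).edgeSet ∧
        ¬ MVMat n s(u, w) := by
    by_cases h1 : MVMat n s(u, c)
    · refine ⟨d, by rw [hf]; simp, hmem2, fun h2 => ?_⟩
      exact hne12 (mvmat_unique h1 h2 (Sym2.mem_mk_left u c) (Sym2.mem_mk_left u d))
    · exact ⟨c, by rw [hf]; simp, hmem1, h1⟩
  refine ⟨⟨s(u, w), hwmem⟩, ?_, ?_, ?_⟩
  · intro hX
    rcases hX with ⟨v, hv, hv0⟩ | hm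
    · simp only [Sym2.mem_iff] at hv
      rcases hv with rfl | rfl
      · exact hu0 hv0
      · exact hf0 v hwf hv0
    · exact hmat hm
  · rw [lineGraph_adj_iff_exists]
    constructor
    · intro h
      apply hdisj
      refine ⟨w, ?_, hwf⟩
      rw [h]
      simp
    · exact ⟨u, hu, by simp⟩
  · rw [lineGraph_adj_iff_exists]
    constructor
    · intro h
      apply hdisj
      exact ⟨u, hu, by rw [← (congrArg Subtype.val h)]; simp⟩
    · exact ⟨w, by simp, hwf⟩

lemma mvx_total : IsTotalMutualVisSet (⊤ : SimpleGraph (Fin n)).lineGraph (MVX n) := by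
  intro x y
  by_cases hxy : x = y
  · subst hxy
    refine ⟨SimpleGraph.Walk.nil, by simp [SimpleGraph.dist_self], ?_⟩
    intro v hv hvx _
    simp only [SimpleGraph.Walk.support_nil, List.mem_singleton] at hv
    exact absurd hv hvx
  by_cases hadj : (⊤ : SimpleGraph (Fin n)).lineGraph.Adj x y
  · refine ⟨SimpleGraph.Walk.cons hadj SimpleGraph.Walk.nil, ?_, ?_⟩
    · rw [SimpleGraph.dist_eq_one_iff_adj.mpr hadj]
      simp
    · intro v hv hvx hvy
      simp only [SimpleGraph.Walk.support_cons, SimpleGraph.Walk.support_nil,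
        List.mem_cons, List.mem_singleton, List.not_mem_nil, or_false] at hv
      rcases hv with rfl | rfl
      · exact absurd rfl hvx
      · exact absurd rfl hvy
  · have hdisj : ¬ ∃ v, v ∈ (x : Sym2 (Fin n)) ∧ v ∈ (y : Sym2 (Fin n)) := by
      rintro ⟨v, h1, h2⟩
      exact hadj (lineGraph_adj_iff_exists.mpr ⟨hxy, v, h1, h2⟩)
    obtain ⟨g, hgX, hxg, hgy⟩ : ∃ g, g ∉ MVX n ∧
        (⊤ : SimpleGraph (Fin n)).lineGraph.Adj x g ∧
        (⊤ : SimpleGraph (Fin n)).lineGraph.Adj g y := by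
      by_cases h0 : ∀ v ∈ (y : Sym2 (Fin n)), (v : ℕ) ≠ 0
      · exact mv_key x y hdisj h0
      · push_neg at h0
        obtain ⟨v0, hv0, hv00⟩ := h0
        have h0x : ∀ v ∈ (x : Sym2 (Fin n)), (v : ℕ) ≠ 0 := by
          intro v hv hv0'
          apply hdisj
          refine ⟨v, hv, ?_⟩
          have hvv : v = v0 := Fin.ext (by omega)
          rw [hvv]; exact hv0
        obtain ⟨g, h1, h2, h3⟩ := mv_key y x (fun ⟨v, ha, hb⟩ => hdisj ⟨v, hb, ha⟩) h0x
        exact ⟨g, h1, h3.symm, h2.symm⟩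
    refine ⟨SimpleGraph.Walk.cons hxg (SimpleGraph.Walk.cons hgy SimpleGraph.Walk.nil), ?_, ?_⟩
    · have h1 := SimpleGraph.dist_le (SimpleGraph.Walk.cons hxg
        (SimpleGraph.Walk.cons hgy SimpleGraph.Walk.nil))
      simp only [SimpleGraph.Walk.length_cons, SimpleGraph.Walk.length_nil] at h1
      have h2 : 0 < (⊤ : SimpleGraph (Fin n)).lineGraph.dist x y :=
        ((SimpleGraph.Walk.cons hxg (SimpleGraph.Walk.cons hgy
          SimpleGraph.Walk.nil)).reachable).pos_dist_of_ne hxy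
      have h3 : (⊤ : SimpleGraph (Fin n)).lineGraph.dist x y ≠ 1 :=
        fun h => hadj (SimpleGraph.dist_eq_one_iff_adj.mp h)
      simp only [SimpleGraph.Walk.length_cons, SimpleGraph.Walk.length_nil]
      omega
    · intro v hv hvx hvy
      simp only [SimpleGraph.Walk.support_cons, SimpleGraph.Walk.support_nil,
        List.mem_cons, List.not_mem_nil, or_false] at hv
      rcases hv with rfl | rfl | rfl
      · exact absurd rfl hvx
      · exact hgX
      · exact absurd rfl hvy

/-- the injection witnessing the size of `MVX n` -/
def MVF (n : ℕ) : Fin (n - 1) ⊕ Fin ((n - 1) / 2) → (⊤ : SimpleGraph (Fin n)).edgeSet :=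
  Sum.elim
    (fun i => ⟨s(⟨0, by have := i.isLt; omega⟩, ⟨(i : ℕ) + 1, by have := i.isLt; omega⟩), by
      rw [SimpleGraph.mem_edgeSet, top_adj, ne_eq, Fin.mk.injEq]; omega⟩)
    (fun k => ⟨s(⟨2 * (k : ℕ) + 1, by have := k.isLt; omega⟩,
        ⟨2 * (k : ℕ) + 2, by have := k.isLt; omega⟩), by
      rw [SimpleGraph.mem_edgeSet, top_adj, ne_eq, Fin.mk.injEq]; omega⟩)

lemma mvx_card : n - 1 + (n - 1) / 2 ≤ (MVX n).ncard := by
  classical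
  have hF : Function.Injective (MVF n) := by
    rintro (i | i) (j | j) h <;>
      simp only [MVF, Sum.elim_inl, Sum.elim_inr, Subtype.mk.injEq, Sym2.eq_iff,
        Fin.mk.injEq] at h
    · exact congrArg Sum.inl (Fin.ext (by omega))
    · exact absurd h (by omega)
    · exact absurd h (by omega)
    · exact congrArg Sum.inr (Fin.ext (by omega))
  have h1 : Set.range (MVF n) ⊆ MVX n := by
    rintro _ ⟨(i | i), rfl⟩
    · exact Or.inl ⟨_, Sym2.mem_mk_left _ _, rfl⟩
    · exact Or.inr ⟨_, _, rfl, by simp only [Fin.val_mk]; omega, by simp⟩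
  have h2 : (Set.range (MVF n)).ncard = (n - 1) + (n - 1) / 2 := by
    rw [← Set.image_univ, Set.ncard_image_of_injective _ hF, Set.ncard_univ,
      Nat.card_eq_fintype_card]
    simp
  calc n - 1 + (n - 1) / 2 = (Set.range (MVF n)).ncard := h2.symm
    _ ≤ (MVX n).ncard := Set.ncard_le_ncard h1 (Set.toFinite _)

end MVAux

theorem muTotal_lineGraph_complete_lower_bound (n : ℕ) (hn : 3 ≤ n) :
    n - 1 + (n - 1) / 2 ≤ muTotal (⊤ : SimpleGraph (Fin n)).lineGraph := by
  classical
  have hmem : (MVX n).ncard ∈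
      {k | ∃ X : Set ((⊤ : SimpleGraph (Fin n)).edgeSet),
        IsTotalMutualVisSet (⊤ : SimpleGraph (Fin n)).lineGraph X ∧ X.ncard = k} :=
    ⟨MVX n, mvx_total, rfl⟩
  have hbdd : BddAbove {k | ∃ X : Set ((⊤ : SimpleGraph (Fin n)).edgeSet),
      IsTotalMutualVisSet (⊤ : SimpleGraph (Fin n)).lineGraph X ∧ X.ncard = k} := by
    refine ⟨Fintype.card ((⊤ : SimpleGraph (Fin n)).edgeSet), ?_⟩
    rintro k ⟨X, -, rfl⟩
    have h := Set.ncard_le_ncard (Set.subset_univ X) Set.finite_univ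
    rwa [Set.ncard_univ, Nat.card_eq_fintype_card] at h
  exact mvx_card.trans (le_csSup hbdd hmem)
end MutualVisibility
end
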